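/- Fix a prime p. Let u₁, u₂, u₃ ∈ (0,1) with u₁ + u₂ + u₃ = 2, with non-terminating base p digits dᵢ,ₛ. If dᵢ,ₛ + d₂,ₛ + d₃,ₛ = 2p - 2 for all s up to some minimal e where the sum is 2p - 3 instead, then for all s > e each digit dᵢ,ₛ equals p - 1. -/

import Mathlib

/-- If `u₁,u₂,u₃ ∈ (0,1)` sum to `2`, have non-terminating base-`p` expansions with digit
sums `2p−2` at all positions before a minimal position `e` where the digit sum is `2p−3`,
then every digit at every position after `e` equals `p−1`. -/
theorem stmt12 (p : ℕ) (hp : p.Prime) (u : Fin 3 → ℝ) (d : Fin 3 → ℕ → ℕ)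
    (hu : ∀ i, u i ∈ Set.Ioo (0 : ℝ) 1)
    (hsum : u 0 + u 1 + u 2 = 2)
    (hdig : ∀ i s, d i s < p)
    (hexp : ∀ i, u i = ∑' s : ℕ, (d i s : ℝ) / p ^ (s + 1))
    (hnt : ∀ i N, ∃ s, N ≤ s ∧ d i s ≠ 0)
    (e : ℕ)
    (hmin : ∀ s < e, d 0 s + d 1 s + d 2 s = 2 * p - 2)
    (he : d 0 e + d 1 e + d 2 e = 2 * p - 3) :
    ∀ s, e < s → ∀ i, d i s = p - 1 := by
  have hp2 : 2 ≤ p := hp.two_le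
  have hp1 : (1:ℝ) < p := by exact_mod_cast hp.one_lt
  have hp0 : (0:ℝ) < p := by linarith
  set r : ℝ := (p:ℝ)⁻¹ with hr
  have hr0 : 0 < r := by positivity
  have hr1 : r < 1 := inv_lt_one_of_one_lt₀ hp1
  have hpr : (p:ℝ) * r = 1 := mul_inv_cancel₀ hp0.ne'
  have hrpow : ∀ s : ℕ, ((p:ℝ) ^ (s+1))⁻¹ = r ^ (s+1) := fun s => by
    rw [hr, inv_pow]
  -- digit series are summable
  have hsumm : ∀ i, Summable (fun s => (d i s : ℝ) / (p:ℝ) ^ (s+1)) := by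
    intro i
    apply Summable.of_nonneg_of_le (fun s => by positivity) (fun s => ?_)
      (summable_geometric_of_lt_one hr0.le hr1)
    have hd : (d i s : ℝ) ≤ p := by exact_mod_cast (hdig i s).le
    calc (d i s : ℝ) / (p:ℝ) ^ (s+1) ≤ (p:ℝ) / (p:ℝ) ^ (s+1) := by gcongr
    _ = r ^ s := by
        rw [pow_succ', div_eq_mul_inv, mul_inv, ← mul_assoc, mul_inv_cancel₀ hp0.ne',
          one_mul, ← inv_pow]
  -- the combined digit series
  set F : ℕ → ℝ := fun s => ((d 0 s + d 1 s + d 2 s : ℕ) : ℝ) * r ^ (s+1) with hF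
  have hFeq : ∀ s, F s = (d 0 s : ℝ) / (p:ℝ) ^ (s+1) + (d 1 s : ℝ) / (p:ℝ) ^ (s+1)
      + (d 2 s : ℝ) / (p:ℝ) ^ (s+1) := by
    intro s
    rw [hF]
    push_cast
    rw [← add_div, ← add_div, div_eq_mul_inv, hrpow]
  have hFsumm : Summable F := by
    rw [show F = _ from funext hFeq]
    exact ((hsumm 0).add (hsumm 1)).add (hsumm 2)
  have hFsum : ∑' s, F s = 2 := by
    rw [show F = _ from funext hFeq]
    rw [Summable.tsum_add ((hsumm 0).add (hsumm 1)) (hsumm 2), Summable.tsum_add (hsumm 0) (hsumm 1)]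
    rw [← hexp 0, ← hexp 1, ← hexp 2]
    exact hsum
  -- g is the defect from the maximal digit sum
  set g : ℕ → ℝ := fun s => 3 * ((p:ℝ) - 1) * r ^ (s+1) - F s with hg
  have hgeo : Summable (fun s : ℕ => r ^ (s+1)) := by
    exact (summable_geometric_of_lt_one hr0.le hr1).comp_injective (add_left_injective 1)
  have hgeosum : ∑' s : ℕ, r ^ (s+1) = r / (1 - r) := by
    have := tsum_geometric_of_lt_one hr0.le hr1
    calc ∑' s : ℕ, r ^ (s+1) = ∑' s : ℕ, r * r ^ s := by
          congr 1; funext s; rw [pow_succ']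
    _ = r * ∑' s : ℕ, r ^ s := tsum_mul_left
    _ = r * (1 - r)⁻¹ := by rw [this]
    _ = r / (1 - r) := by rw [div_eq_mul_inv]
  have hgsumm : Summable g := (hgeo.mul_left _).sub hFsumm
  have h1r : 1 - r = ((p:ℝ) - 1) * r := by
    rw [sub_mul, one_mul, hpr]
  have hgsum : ∑' s, g s = 1 := by
    rw [hg]
    rw [Summable.tsum_sub (hgeo.mul_left _) hFsumm, tsum_mul_left, hgeosum, hFsum, h1r]
    have hpne : (p:ℝ) - 1 ≠ 0 := by linarith
    field_simp
    ring
  -- g is nonneg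
  have hgnn : ∀ s, 0 ≤ g s := by
    intro s
    rw [hg, hF]
    simp only
    have hD : ((d 0 s + d 1 s + d 2 s : ℕ) : ℝ) ≤ 3 * ((p:ℝ) - 1) := by
      have h0 := hdig 0 s; have h1 := hdig 1 s; have h2 := hdig 2 s
      have : (d 0 s + d 1 s + d 2 s : ℕ) ≤ 3 * (p - 1) := by omega
      calc ((d 0 s + d 1 s + d 2 s : ℕ) : ℝ) ≤ ((3 * (p-1) : ℕ) : ℝ) := by exact_mod_cast this
      _ = 3 * ((p:ℝ) - 1) := by push_cast [Nat.cast_sub hp.one_le]; ring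
    have hrp : (0:ℝ) ≤ r ^ (s+1) := by positivity
    nlinarith
  -- partial sum up to e equals 1
  have hpartial : ∑ s ∈ Finset.range (e+1), g s = 1 := by
    have hge : g e = r ^ e := by
      show 3 * ((p:ℝ) - 1) * r ^ (e+1) - ((d 0 e + d 1 e + d 2 e : ℕ) : ℝ) * r ^ (e+1) = r ^ e
      rw [he]
      have hc : ((2 * p - 3 : ℕ) : ℝ) = 2 * (p:ℝ) - 3 := by
        have : 3 ≤ 2 * p := by omega
        push_cast [Nat.cast_sub this]; ring
      rw [hc, pow_succ]
      have : (3 * ((p:ℝ) - 1) - (2 * (p:ℝ) - 3)) = (p:ℝ) := by ring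
      rw [← sub_mul, this]
      calc (p:ℝ) * (r ^ e * r) = ((p:ℝ) * r) * r ^ e := by ring
      _ = r ^ e := by rw [hpr, one_mul]
    have hglt : ∀ s < e, g s = (1 - r) * r ^ s := by
      intro s hs
      show 3 * ((p:ℝ) - 1) * r ^ (s+1) - ((d 0 s + d 1 s + d 2 s : ℕ) : ℝ) * r ^ (s+1)
        = (1 - r) * r ^ s
      rw [hmin s hs]
      have hc : ((2 * p - 2 : ℕ) : ℝ) = 2 * (p:ℝ) - 2 := by
        have : 2 ≤ 2 * p := by omega
        push_cast [Nat.cast_sub this]; ring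
      rw [hc, pow_succ]
      have : (3 * ((p:ℝ) - 1) - (2 * (p:ℝ) - 2)) = (p:ℝ) - 1 := by ring
      rw [← sub_mul, this, h1r]
      ring
    rw [Finset.sum_range_succ, hge, Finset.sum_congr rfl (fun s hs => hglt s (Finset.mem_range.mp hs))]
    rw [← Finset.mul_sum]
    have hgs : (1 - r) * ∑ s ∈ Finset.range e, r ^ s = 1 - r ^ e := by
      linear_combination (-1 : ℝ) * geom_sum_mul r e
    rw [hgs]; ring
  -- tail sum is zero
  have htail : ∑' k : ℕ, g (k + (e+1)) = 0 := by
    have := Summable.sum_add_tsum_nat_add (f := g) (e+1) hgsumm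
    rw [hgsum, hpartial] at this
    linarith
  have htsumm : Summable (fun k => g (k + (e+1))) := hgsumm.comp_injective (add_left_injective _)
  have hgzero : ∀ k : ℕ, g (k + (e+1)) = 0 := by
    intro k
    have hle : g (k + (e+1)) ≤ ∑' k : ℕ, g (k + (e+1)) :=
      Summable.le_tsum htsumm k (fun j _ => hgnn _)
    have := hgnn (k + (e+1))
    rw [htail] at hle
    linarith
  -- conclude
  intro s hs i
  have hkey : g s = 0 := by
    have : s = (s - (e+1)) + (e+1) := by omega
    rw [this]; exact hgzero _
  rw [hg, hF] at hkey
  simp only at hkey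
  have hrp : (0:ℝ) < r ^ (s+1) := by positivity
  have hD : ((d 0 s + d 1 s + d 2 s : ℕ) : ℝ) = 3 * ((p:ℝ) - 1) := by
    have := sub_eq_zero.mp hkey
    -- 3*(p-1)*r^(s+1) = D * r^(s+1)
    nlinarith [this]
  have hDn : d 0 s + d 1 s + d 2 s = 3 * (p - 1) := by
    have : ((d 0 s + d 1 s + d 2 s : ℕ) : ℝ) = ((3 * (p-1) : ℕ) : ℝ) := by
      rw [hD]; push_cast [Nat.cast_sub hp.one_le]; ring
    exact_mod_cast this
  have h0 := hdig 0 s; have h1 := hdig 1 s; have h2 := hdig 2 s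
  fin_cases i
  · show d 0 s = p - 1; omega
  · show d 1 s = p - 1; omega
  · show d 2 s = p - 1; omega
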